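/- ∫_0^∞ ∫_0^∞ (2γ + log(xy)) / (1 + x + y)³ dx dy = γ, where γ is the Euler–Mascheroni constant. -/

import Mathlib

open MeasureTheory Set Filter


lemma integrableOn_abs_log_Ioc : IntegrableOn (fun x => |Real.log x|) (Ioc (0:ℝ) 1) := by
  have h : IntegrableOn (fun x => -Real.log x) (Ioc (0:ℝ) 1) := by
    apply intervalIntegral.integrableOn_deriv_of_nonneg (g := fun x => x - x * Real.log x)
    · exact (continuous_id.sub Real.continuous_mul_log).continuousOn
    · intro x hx
      have hx0 : x ≠ 0 := (hx.1).ne'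
      have : HasDerivAt (fun x : ℝ => x - x * Real.log x)
          (1 - (1 * Real.log x + x * x⁻¹)) x :=
        (hasDerivAt_id x).sub ((hasDerivAt_id x).mul (Real.hasDerivAt_log hx0))
      convert this using 1
      field_simp
      ring
    · intro x hx
      simp only [neg_nonneg]
      exact Real.log_nonpos hx.1.le hx.2.le
  apply h.congr_fun ?_ measurableSet_Ioc
  intro x hx
  exact (abs_of_nonpos (Real.log_nonpos hx.1.le hx.2)).symm

lemma lemA (a c : ℝ) (ha : 0 < a) :
    ∫ x in Ioi (0:ℝ), (c + Real.log x) / (a + x) ^ (3:ℕ)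
      = (c + Real.log a - 1) / (2 * a ^ 2) := by
  set F : ℝ → ℝ := fun x => Real.log x * (1/(2*a^2) - 1/(2*(a+x)^2))
      - Real.log (a+x) / (2*a^2) + 1/(2*a*(a+x)) - c/(2*(a+x)^2) with hF
  have hderiv : ∀ x ∈ Ioi (0:ℝ), HasDerivAt F ((c + Real.log x) / (a + x) ^ (3:ℕ)) x := by
    intro x hx
    have hx0 : (0:ℝ) < x := hx
    have hax : (0:ℝ) < a + x := by linarith
    have hD : HasDerivAt (fun t : ℝ => a + t) 1 x := by
      simpa using (hasDerivAt_id x).const_add a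
    have h2 : HasDerivAt (fun t : ℝ => 2*(a+t)^2) (2*(2*(a+x)*1)) x := by
      exact ((hD.pow 2).const_mul 2).congr_deriv (by ring)
    have hq : HasDerivAt (fun t : ℝ => 1/(2*(a+t)^2))
        ((0 * (2*(a+x)^2) - 1 * (2*(2*(a+x)*1))) / (2*(a+x)^2)^2) x :=
      (hasDerivAt_const x (1:ℝ)).div h2 (by positivity)
    have hT1 : HasDerivAt (fun t : ℝ => Real.log t * (1/(2*a^2) - 1/(2*(a+t)^2)))
        (x⁻¹ * (1/(2*a^2) - 1/(2*(a+x)^2)) + Real.log x *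
          (0 - (0 * (2*(a+x)^2) - 1 * (2*(2*(a+x)*1))) / (2*(a+x)^2)^2)) x :=
      (Real.hasDerivAt_log hx0.ne').mul ((hasDerivAt_const x _).sub hq)
    have hT2 : HasDerivAt (fun t : ℝ => Real.log (a+t) / (2*a^2)) ((1/(a+x)) / (2*a^2)) x := by
      exact (hD.log hax.ne').div_const (2*a^2)
    have hT3 : HasDerivAt (fun t : ℝ => 1/(2*a*(a+t)))
        ((0 * (2*a*(a+x)) - 1 * (2*a*1)) / (2*a*(a+x))^2) x :=
      (hasDerivAt_const x (1:ℝ)).div (hD.const_mul (2*a)) (by positivity)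
    have hT4 : HasDerivAt (fun t : ℝ => c/(2*(a+t)^2))
        ((0 * (2*(a+x)^2) - c * (2*(2*(a+x)*1))) / (2*(a+x)^2)^2) x :=
      (hasDerivAt_const x c).div h2 (by positivity)
    have hbig := ((hT1.sub hT2).add hT3).sub hT4
    refine hbig.congr_deriv ?_
    field_simp
    ring
  have hcont : ContinuousOn F (Ici (0:ℝ)) := by
    have hax : ∀ x ∈ Ici (0:ℝ), (0:ℝ) < a + x := fun x hx => by
      have : (0:ℝ) ≤ x := hx; linarith
    have h1 : ContinuousOn (fun x : ℝ => (x * Real.log x) * ((2*a+x)/(2*a^2*(a+x)^2)))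
        (Ici 0) := by
      apply Real.continuous_mul_log.continuousOn.mul
      exact ContinuousOn.div (by fun_prop) (by fun_prop)
        (fun x hx => by have := hax x hx; positivity)
    have heq : ∀ x ∈ Ici (0:ℝ), F x = (x * Real.log x) * ((2*a+x)/(2*a^2*(a+x)^2))
        - Real.log (a+x) / (2*a^2) + 1/(2*a*(a+x)) - c/(2*(a+x)^2) := by
      intro x hx
      have h0 := hax x hx
      simp only [hF]
      have : Real.log x * (1/(2*a^2) - 1/(2*(a+x)^2))
          = (x * Real.log x) * ((2*a+x)/(2*a^2*(a+x)^2)) := by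
        field_simp
        ring
      rw [this]
    apply ContinuousOn.congr ?_ (fun x hx => heq x hx)
    apply ContinuousOn.sub
    apply ContinuousOn.add
    apply ContinuousOn.sub h1
    · exact ContinuousOn.div (Real.continuousOn_log.comp (by fun_prop)
        (fun x hx => (hax x hx).ne')) continuousOn_const (fun x _ => by positivity)
    · exact ContinuousOn.div continuousOn_const (by fun_prop)
        (fun x hx => by have := hax x hx; positivity)
    · exact ContinuousOn.div continuousOn_const (by fun_prop)
        (fun x hx => by have := hax x hx; positivity)
  have hint : IntegrableOn (fun x => (c + Real.log x) / (a + x) ^ (3:ℕ)) (Ioi (0:ℝ)) := by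
    have hmeas : AEStronglyMeasurable (fun x : ℝ => (c + Real.log x) / (a + x) ^ (3:ℕ))
        (volume.restrict (Ioi (0:ℝ))) :=
      (((measurable_const.add Real.measurable_log).div
        ((measurable_const.add measurable_id).pow_const 3)).aestronglyMeasurable)
    rw [← Ioc_union_Ioi_eq_Ioi (zero_le_one (α := ℝ))]
    apply IntegrableOn.union
    · apply Integrable.mono (g := fun x => (|c| + |Real.log x|) / a^3)
        (((integrableOn_const measure_Ioc_lt_top.ne).add
          integrableOn_abs_log_Ioc).div_const _) (hmeas.mono_measure
            (Measure.restrict_mono Ioc_subset_Ioi_self le_rfl))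
      filter_upwards [ae_restrict_mem measurableSet_Ioc] with x hx
      have hx0 : (0:ℝ) < x := hx.1
      have hax : (0:ℝ) < a + x := by linarith
      rw [Real.norm_eq_abs, abs_div, abs_of_pos (by positivity : (0:ℝ) < (a+x)^(3:ℕ)),
        Real.norm_eq_abs, abs_of_nonneg (by positivity : (0:ℝ) ≤ (|c| + |Real.log x|) / a^3)]
      gcongr
      · exact abs_add_le _ _
      · linarith
    · apply Integrable.mono (g := fun x => (|c| + 1) * x ^ (-2 : ℝ))
        ((integrableOn_Ioi_rpow_of_lt (by norm_num) one_pos).const_mul _)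
        (hmeas.mono_measure (Measure.restrict_mono (Ioi_subset_Ioi zero_le_one) le_rfl))
      filter_upwards [ae_restrict_mem measurableSet_Ioi] with x hx
      have hx1 : (1:ℝ) < x := hx
      have hx0 : (0:ℝ) < x := by linarith
      have hax : (0:ℝ) < a + x := by linarith
      have hlog : |Real.log x| ≤ x := by
        rw [abs_of_nonneg (Real.log_nonneg hx1.le)]
        have := Real.log_le_sub_one_of_pos hx0
        linarith
      have hrw : (|c| + 1) * x ^ (-2 : ℝ) = ((|c| + 1) * x) / x^(3:ℕ) := by
        rw [Real.rpow_neg hx0.le, show (2:ℝ) = ((2:ℕ):ℝ) by norm_num, Real.rpow_natCast]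
        field_simp
      rw [Real.norm_eq_abs, abs_div, abs_of_pos (by positivity : (0:ℝ) < (a+x)^(3:ℕ)),
        Real.norm_eq_abs,
        abs_of_nonneg (show (0:ℝ) ≤ (|c| + 1) * x ^ (-2:ℝ) by positivity), hrw]
      have h1 : |c + Real.log x| ≤ (|c| + 1) * x := by
        calc |c + Real.log x| ≤ |c| + |Real.log x| := abs_add_le _ _
          _ ≤ |c| + x := by linarith
          _ ≤ (|c| + 1) * x := by nlinarith [abs_nonneg c]
      have h2 : x^(3:ℕ) ≤ (a+x)^(3:ℕ) := by gcongr; linarith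
      exact div_le_div₀ (by positivity) h1 (by positivity) h2
  have htop : Tendsto F atTop (nhds 0) := by
    have haxTop : Tendsto (fun x : ℝ => a + x) atTop atTop :=
      tendsto_atTop_add_const_left _ a tendsto_id
    have hfrac : Tendsto (fun x : ℝ => x / (a + x)) atTop (nhds 1) := by
      have h0 : Tendsto (fun x : ℝ => 1 - a / (a + x)) atTop (nhds (1 - 0)) :=
        tendsto_const_nhds.sub (tendsto_const_nhds.div_atTop haxTop)
      rw [sub_zero] at h0
      apply h0.congr'
      filter_upwards [eventually_gt_atTop 0] with x hx
      have hax : (0:ℝ) < a + x := by linarith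
      rw [eq_div_iff hax.ne', sub_mul, div_mul_cancel₀ _ hax.ne']
      ring
    have h2axTop : Tendsto (fun x : ℝ => 2*(a+x)) atTop atTop :=
      haxTop.const_mul_atTop two_pos
    have hsqTop : Tendsto (fun x : ℝ => 2*(a+x)^2) atTop atTop :=
      (((tendsto_pow_atTop two_ne_zero).comp haxTop).const_mul_atTop two_pos)
    have hT1 : Tendsto (fun x : ℝ => Real.log (x/(a+x)) / (2*a^2)) atTop (nhds 0) := by
      have := ((Real.continuousAt_log one_ne_zero).tendsto.comp hfrac).div_const (2*a^2)
      simpa using this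
    have hlogx : Tendsto (fun x : ℝ => Real.log x / x) atTop (nhds 0) :=
      Real.isLittleO_log_id_atTop.tendsto_div_nhds_zero
    have hinv2ax : Tendsto (fun x : ℝ => 1/(2*(a+x))) atTop (nhds 0) :=
      tendsto_const_nhds.div_atTop h2axTop
    have hT2 : Tendsto (fun x : ℝ => (Real.log x / x) * (x/(a+x)) * (1/(2*(a+x))))
        atTop (nhds 0) := by
      simpa using (hlogx.mul hfrac).mul hinv2ax
    have hT3 : Tendsto (fun x : ℝ => 1/(2*a*(a+x))) atTop (nhds 0) :=
      tendsto_const_nhds.div_atTop (haxTop.const_mul_atTop (by positivity))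
    have hT4 : Tendsto (fun x : ℝ => c/(2*(a+x)^2)) atTop (nhds 0) :=
      tendsto_const_nhds.div_atTop hsqTop
    have hall := ((hT1.sub hT2).add hT3).sub hT4
    rw [show (0:ℝ) - 0 + 0 - 0 = 0 from by ring] at hall
    apply hall.congr'
    filter_upwards [eventually_gt_atTop 0] with x hx
    have hax : (0:ℝ) < a + x := by linarith
    simp only [hF]
    rw [Real.log_div hx.ne' hax.ne']
    field_simp
    ring
  have key := integral_Ioi_of_hasDerivAt_of_tendsto
    (hcont.continuousWithinAt (le_refl (0:ℝ))) hderiv hint htop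
  rw [key, hF]
  simp only [add_zero, Real.log_zero]
  field_simp
  ring

lemma lemB (c' : ℝ) :
    ∫ y in Ioi (0:ℝ), (c' + Real.log y + Real.log (1+y)) / (2*(1+y)^2) = (c'+1)/2 := by
  set K : ℝ → ℝ := fun y => -(c'/(2*(1+y))) - (Real.log (1+y)+1)/(2*(1+y))
      + y*Real.log y/(2*(1+y)) - Real.log (1+y)/2 with hK
  have hderiv : ∀ y ∈ Ioi (0:ℝ), HasDerivAt K
      ((c' + Real.log y + Real.log (1+y)) / (2*(1+y)^2)) y := by
    intro y hy
    have hy0 : (0:ℝ) < y := hy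
    have h1y : (0:ℝ) < 1 + y := by linarith
    have hD : HasDerivAt (fun t : ℝ => 1 + t) 1 y := by
      simpa using (hasDerivAt_id y).const_add 1
    have h2y : HasDerivAt (fun t : ℝ => 2*(1+t)) (2*1) y := hD.const_mul 2
    have hlog1y : HasDerivAt (fun t : ℝ => Real.log (1+t)) (1/(1+y)) y := hD.log h1y.ne'
    have T1 : HasDerivAt (fun t : ℝ => -(c'/(2*(1+t))))
        (-((0 * (2*(1+y)) - c' * (2*1)) / (2*(1+y))^2)) y :=
      ((hasDerivAt_const y c').div h2y (by positivity)).neg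
    have T2 : HasDerivAt (fun t : ℝ => (Real.log (1+t)+1)/(2*(1+t)))
        (((1/(1+y)) * (2*(1+y)) - (Real.log (1+y)+1) * (2*1)) / (2*(1+y))^2) y :=
      (hlog1y.add_const 1).div h2y (by positivity)
    have T3 : HasDerivAt (fun t : ℝ => t*Real.log t/(2*(1+t)))
        (((1*Real.log y + y*y⁻¹) * (2*(1+y)) - y*Real.log y * (2*1)) / (2*(1+y))^2) y :=
      ((hasDerivAt_id y).mul (Real.hasDerivAt_log hy0.ne')).div h2y (by positivity)
    have T4 : HasDerivAt (fun t : ℝ => Real.log (1+t)/2) ((1/(1+y))/2) y :=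
      hlog1y.div_const 2
    have hbig := ((T1.sub T2).add T3).sub T4
    refine hbig.congr_deriv ?_
    field_simp
    ring
  have hcont : ContinuousOn K (Ici (0:ℝ)) := by
    have h1y : ∀ y ∈ Ici (0:ℝ), (1:ℝ) + y ≠ 0 := fun y hy => by
      have : (0:ℝ) ≤ y := hy; positivity
    apply ContinuousOn.sub
    apply ContinuousOn.add
    apply ContinuousOn.sub
    · exact (ContinuousOn.div continuousOn_const (by fun_prop)
        (fun y hy => by have := h1y y hy; simpa using by positivity)).neg
    · exact ContinuousOn.div ((ContinuousOn.log (by fun_prop) h1y).add continuousOn_const)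
        (by fun_prop) (fun y hy => by have : (0:ℝ) ≤ y := hy; positivity)
    · exact ContinuousOn.div Real.continuous_mul_log.continuousOn (by fun_prop)
        (fun y hy => by have : (0:ℝ) ≤ y := hy; positivity)
    · exact ((ContinuousOn.log (by fun_prop) h1y).div_const 2)
  have hint : IntegrableOn (fun y : ℝ => (c' + Real.log y + Real.log (1+y)) / (2*(1+y)^2))
      (Ioi (0:ℝ)) := by
    have hmeas : AEStronglyMeasurable
        (fun y : ℝ => (c' + Real.log y + Real.log (1+y)) / (2*(1+y)^2))
        (volume.restrict (Ioi (0:ℝ))) :=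
      (((measurable_const.add Real.measurable_log).add
        (Real.measurable_log.comp (measurable_const.add measurable_id))).div
        (((measurable_const.add measurable_id).pow_const 2).const_mul 2)).aestronglyMeasurable
    rw [← Ioc_union_Ioi_eq_Ioi (zero_le_one (α := ℝ))]
    apply IntegrableOn.union
    · apply Integrable.mono (g := fun y => (|c'| + |Real.log y| + 1)/2)
        ((((integrableOn_const measure_Ioc_lt_top.ne).add
          integrableOn_abs_log_Ioc).add
          (integrableOn_const measure_Ioc_lt_top.ne)).div_const _)
        (hmeas.mono_measure (Measure.restrict_mono Ioc_subset_Ioi_self le_rfl))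
      filter_upwards [ae_restrict_mem measurableSet_Ioc] with y hy
      have hy0 : (0:ℝ) < y := hy.1
      have h1y : (0:ℝ) < 1 + y := by linarith
      have hlog1y : |Real.log (1+y)| ≤ 1 := by
        rw [abs_of_nonneg (Real.log_nonneg (by linarith))]
        have := Real.log_le_sub_one_of_pos h1y
        have := hy.2
        linarith
      rw [Real.norm_eq_abs, abs_div,
        abs_of_pos (show (0:ℝ) < 2*(1+y)^2 by positivity), Real.norm_eq_abs,
        abs_of_nonneg (show (0:ℝ) ≤ (|c'| + |Real.log y| + 1)/2 by positivity)]
      have h1 : |c' + Real.log y + Real.log (1+y)| ≤ |c'| + |Real.log y| + 1 := by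
        calc |c' + Real.log y + Real.log (1+y)|
            ≤ |c' + Real.log y| + |Real.log (1+y)| := abs_add_le _ _
          _ ≤ |c'| + |Real.log y| + 1 := by
              have := abs_add_le c' (Real.log y); linarith
      exact div_le_div₀ (by positivity) h1 (by norm_num) (by nlinarith)
    · apply Integrable.mono (g := fun y => (|c'| + 5) * y ^ (-(3/2) : ℝ))
        ((integrableOn_Ioi_rpow_of_lt (by norm_num) one_pos).const_mul _)
        (hmeas.mono_measure (Measure.restrict_mono (Ioi_subset_Ioi zero_le_one) le_rfl))
      filter_upwards [ae_restrict_mem measurableSet_Ioi] with y hy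
      have hy1 : (1:ℝ) < y := hy
      have hy0 : (0:ℝ) < y := by linarith
      have h1y : (0:ℝ) < 1 + y := by linarith
      have hsq : (1:ℝ) ≤ Real.sqrt y := by
        rw [show (1:ℝ) = Real.sqrt 1 by simp]
        exact Real.sqrt_le_sqrt hy1.le
      have hlogy : Real.log y ≤ 2 * Real.sqrt y := by
        have h1 : Real.log (Real.sqrt y) ≤ Real.sqrt y - 1 :=
          Real.log_le_sub_one_of_pos (by positivity)
        have h2 : Real.log (Real.sqrt y) = Real.log y / 2 := Real.log_sqrt hy0.le
        linarith
      have hlog1ybd : Real.log (1+y) ≤ 3 * Real.sqrt y := by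
        have h1 : Real.log (Real.sqrt (1+y)) ≤ Real.sqrt (1+y) - 1 :=
          Real.log_le_sub_one_of_pos (by positivity)
        have h2 : Real.log (Real.sqrt (1+y)) = Real.log (1+y) / 2 := Real.log_sqrt h1y.le
        have h3 : Real.sqrt (1+y) ≤ Real.sqrt 2 * Real.sqrt y := by
          rw [← Real.sqrt_mul (by norm_num)]
          exact Real.sqrt_le_sqrt (by linarith)
        have h4 : Real.sqrt 2 ≤ 1.5 := by
          rw [show (1.5:ℝ) = Real.sqrt (1.5^2) by rw [Real.sqrt_sq]; norm_num]
          exact Real.sqrt_le_sqrt (by norm_num)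
        nlinarith [Real.sqrt_nonneg y]
      have h32 : (|c'| + 5) * y ^ (-(3/2) : ℝ) = (|c'| + 5) * Real.sqrt y / y^(2:ℕ) := by
        rw [Real.sqrt_eq_rpow, mul_div_assoc, ← Real.rpow_natCast y 2,
          ← Real.rpow_sub hy0]
        norm_num
      rw [Real.norm_eq_abs, abs_div,
        abs_of_pos (show (0:ℝ) < 2*(1+y)^2 by positivity), Real.norm_eq_abs,
        abs_of_nonneg (show (0:ℝ) ≤ (|c'| + 5) * y ^ (-(3/2):ℝ) by positivity), h32]
      have h1 : |c' + Real.log y + Real.log (1+y)| ≤ (|c'| + 5) * Real.sqrt y := by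
        have ha := abs_add_le (c' + Real.log y) (Real.log (1+y))
        have hb := abs_add_le c' (Real.log y)
        have hc : |Real.log y| = Real.log y := abs_of_nonneg (Real.log_nonneg hy1.le)
        have hd : |Real.log (1+y)| = Real.log (1+y) :=
          abs_of_nonneg (Real.log_nonneg (by linarith))
        nlinarith [abs_nonneg c', Real.sqrt_nonneg y]
      exact div_le_div₀ (by positivity) h1 (by positivity) (by nlinarith)
  have htop : Tendsto K atTop (nhds 0) := by
    have h1yTop : Tendsto (fun y : ℝ => 1 + y) atTop atTop :=
      tendsto_atTop_add_const_left _ 1 tendsto_id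
    have h2t : Tendsto (fun y : ℝ => 2*(1+y)) atTop atTop :=
      h1yTop.const_mul_atTop two_pos
    have hlogdiv : Tendsto (fun y : ℝ => Real.log (1+y) / (1+y)) atTop (nhds 0) :=
      Real.isLittleO_log_id_atTop.tendsto_div_nhds_zero.comp h1yTop
    have hmul1 : Tendsto (fun y : ℝ => y * Real.log (1 + 1/y)) atTop (nhds 1) := by
      simpa using Real.tendsto_mul_log_one_add_div_atTop 1
    have T1 : Tendsto (fun y : ℝ => -(c'/(2*(1+y)))) atTop (nhds (-0)) :=
      (tendsto_const_nhds.div_atTop h2t).neg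
    have T2 : Tendsto (fun y : ℝ => Real.log (1+y)/(1+y)/2 + 1/(2*(1+y)))
        atTop (nhds (0/2 + 0)) :=
      (hlogdiv.div_const 2).add (tendsto_const_nhds.div_atTop h2t)
    have T3 : Tendsto (fun y : ℝ => -(y*Real.log (1+1/y))/(2*(1+y)) - Real.log (1+y)/(1+y)/2)
        atTop (nhds (0 - 0/2)) :=
      ((hmul1.neg).div_atTop h2t).sub (hlogdiv.div_const 2)
    have hall := (T1.sub T2).add T3
    rw [show (-0 - (0/2 + 0) + (0 - 0/2) : ℝ) = 0 from by ring] at hall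
    apply hall.congr'
    filter_upwards [eventually_gt_atTop 0] with y hy
    have h1y : (0:ℝ) < 1 + y := by linarith
    have hrw : (1:ℝ) + 1/y = (1+y)/y := by
      field_simp
      ring
    rw [hrw, Real.log_div h1y.ne' hy.ne']
    simp only [hK]
    field_simp
    ring
  have key := integral_Ioi_of_hasDerivAt_of_tendsto
    (hcont.continuousWithinAt (le_refl (0:ℝ))) hderiv hint htop
  rw [key, hK]
  simp only [add_zero, Real.log_zero, Real.log_one, mul_zero, zero_mul]
  norm_num
  ring


theorem double_integral_log_cube :
    ∫ y : ℝ in Ioi 0, ∫ x : ℝ in Ioi 0,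
        (2 * Real.eulerMascheroniConstant + Real.log (x * y)) / (1 + x + y) ^ (3 : ℕ)
      = Real.eulerMascheroniConstant := by
  have h2 : (∫ y : ℝ in Ioi 0, ∫ x : ℝ in Ioi 0,
        (2 * Real.eulerMascheroniConstant + Real.log (x * y)) / (1 + x + y) ^ (3 : ℕ))
      = ∫ y : ℝ in Ioi 0,
        ((2*Real.eulerMascheroniConstant - 1) + Real.log y + Real.log (1+y)) / (2*(1+y)^2) := by
    apply setIntegral_congr_fun measurableSet_Ioi
    intro y hy
    have hy0 : (0:ℝ) < y := hy
    have h1 : ∫ x : ℝ in Ioi 0,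
        (2 * Real.eulerMascheroniConstant + Real.log (x * y)) / (1 + x + y) ^ (3 : ℕ)
        = ∫ x : ℝ in Ioi 0,
          ((2 * Real.eulerMascheroniConstant + Real.log y) + Real.log x)
            / ((1+y) + x) ^ (3 : ℕ) := by
      apply setIntegral_congr_fun measurableSet_Ioi
      intro x hx
      have hx0 : (0:ℝ) < x := hx
      simp only
      rw [Real.log_mul hx0.ne' hy0.ne', show (1:ℝ)+x+y = (1+y)+x from by ring]
      ring_nf
    simp only
    rw [h1, lemA (1+y) (2*Real.eulerMascheroniConstant + Real.log y) (by linarith)]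
    ring_nf
  rw [h2, lemB]
  ring
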